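/- Let d ≥ 1 and let q : ℝ → ℝ^d be continuous. Suppose M : ℝ → Mat(d,ℝ) satisfies M(0) = I and, for every t ≥ 0, M is differentiable at t with derivative M′(t) = M(t)·Q_{q(t)}. Then for every t ≥ 0 there exists y ∈ ℝ^d such that M(t) = (1 − y)·I + C_y with y = y_1 + ⋯ + y_d; in particular, every M(t) is of equal-input form with all row sums equal to 1. If moreover q(t) has all entries ≥ 0 for every t ≥ 0, then every M(t) is a Markov matrix, i.e., has all entries ≥ 0 and all row sums equal to 1. -/

import Mathlib

open Matrix

/-- `eqRows d x` is the `d × d` real matrix all of whose rows equal the row vector `x`. -/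
def eqRows (d : ℕ) (x : Fin d → ℝ) : Matrix (Fin d) (Fin d) ℝ :=
  Matrix.of fun _ j => x j

/-- The equal-input generator `Q_x := −x·I + C_x`, where `x = ∑ᵢ xᵢ`. -/
noncomputable def Qgen (d : ℕ) (x : Fin d → ℝ) : Matrix (Fin d) (Fin d) ℝ :=
  (-(∑ i, x i)) • (1 : Matrix (Fin d) (Fin d) ℝ) + eqRows d x

lemma intDeriv (a : ℝ → ℝ) (ha : Continuous a) (t : ℝ) :
    HasDerivAt (fun u => ∫ s in (0:ℝ)..u, a s) (a t) t :=
  intervalIntegral.integral_hasDerivAt_right (ha.intervalIntegrable _ _)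
    (ha.stronglyMeasurableAtFilter _ _) ha.continuousAt

lemma zero_of_ode (a f : ℝ → ℝ) (ha : Continuous a)
    (hf : ∀ t, 0 ≤ t → HasDerivAt f (-(a t) * f t) t) (h0 : f 0 = 0) :
    ∀ t, 0 ≤ t → f t = 0 := by
  intro t ht
  set A : ℝ → ℝ := fun u => ∫ s in (0:ℝ)..u, a s with hAdef
  have hA : ∀ u, HasDerivAt A (a u) u := intDeriv a ha
  set g : ℝ → ℝ := fun u => Real.exp (A u) * f u with hgdef
  have hg : ∀ u, 0 ≤ u → HasDerivAt g 0 u := by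
    intro u hu
    have h := (hA u).exp.mul (hf u hu)
    refine h.congr_deriv ?_
    ring
  have hcont : ContinuousOn g (Set.Icc 0 t) := fun x hx =>
    ((((hA x).exp).mul (hf x hx.1)).continuousAt).continuousWithinAt
  have hgt : g t = g 0 := constant_of_has_deriv_right_zero hcont
    (fun x hx => (hg x hx.1).hasDerivWithinAt) t (Set.mem_Icc.mpr ⟨ht, le_rfl⟩)
  have h2 : Real.exp (A t) * f t = 0 := by
    have := hgt
    simp only [hgdef, h0, mul_zero] at this
    exact this
  rcases mul_eq_zero.mp h2 with h3 | h3
  · exact absurd h3 (Real.exp_ne_zero _)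
  · exact h3

lemma nonneg_of_ode (a c f : ℝ → ℝ) (ha : Continuous a)
    (hf : ∀ t, 0 ≤ t → HasDerivAt f (-(a t) * f t + c t) t)
    (hc : ∀ t, 0 ≤ t → 0 ≤ c t) (h0 : 0 ≤ f 0) :
    ∀ t, 0 ≤ t → 0 ≤ f t := by
  intro t ht
  set A : ℝ → ℝ := fun u => ∫ s in (0:ℝ)..u, a s with hAdef
  have hA : ∀ u, HasDerivAt A (a u) u := intDeriv a ha
  set g : ℝ → ℝ := fun u => Real.exp (A u) * f u with hgdef
  have hg : ∀ u, 0 ≤ u → HasDerivAt g (Real.exp (A u) * c u) u := by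
    intro u hu
    have h := (hA u).exp.mul (hf u hu)
    refine h.congr_deriv ?_
    ring
  have hmono : MonotoneOn g (Set.Icc 0 t) := by
    apply monotoneOn_of_deriv_nonneg (convex_Icc 0 t)
    · exact fun x hx => ((hg x hx.1).continuousAt).continuousWithinAt
    · intro x hx
      rw [interior_Icc] at hx
      exact ((hg x hx.1.le).differentiableAt).differentiableWithinAt
    · intro x hx
      rw [interior_Icc] at hx
      rw [(hg x hx.1.le).deriv]
      exact mul_nonneg (Real.exp_pos _).le (hc x hx.1.le)
  have h01 : g 0 ≤ g t := hmono (Set.mem_Icc.mpr ⟨le_rfl, ht⟩) (Set.mem_Icc.mpr ⟨ht, le_rfl⟩) ht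
  have hg0 : 0 ≤ g 0 := mul_nonneg (Real.exp_pos _).le h0
  have h2 : 0 ≤ Real.exp (A t) * f t := le_trans hg0 h01
  exact nonneg_of_mul_nonneg_right h2 (Real.exp_pos _)

lemma mul_Qgen_apply (d : ℕ) (x : Fin d → ℝ) (N : Matrix (Fin d) (Fin d) ℝ) (i j : Fin d) :
    (N * Qgen d x) i j = -(∑ k, x k) * N i j + (∑ k, N i k) * x j := by
  simp only [Qgen, Matrix.mul_add, Matrix.add_apply, Matrix.mul_smul, Matrix.mul_one,
    Matrix.smul_apply, smul_eq_mul, Matrix.mul_apply, eqRows, Matrix.of_apply,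
    Finset.sum_mul]
  simp only [mul_add, Finset.sum_add_distrib, Matrix.one_apply, mul_ite, mul_one, mul_zero,
    ite_mul, zero_mul, Finset.sum_ite_eq', Finset.mem_univ, if_true]
  ring

theorem stmt7 (d : ℕ) (hd : 1 ≤ d) (q : ℝ → Fin d → ℝ) (hq : Continuous q)
    (M : ℝ → Matrix (Fin d) (Fin d) ℝ) (hM0 : M 0 = 1)
    (hM : ∀ t, 0 ≤ t → ∀ i j,
      HasDerivAt (fun s => M s i j) ((M t * Qgen d (q t)) i j) t) :
    (∀ t, 0 ≤ t → ∃ y : Fin d → ℝ,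
        M t = (1 - ∑ i, y i) • (1 : Matrix (Fin d) (Fin d) ℝ) + eqRows d y) ∧
    ((∀ t, 0 ≤ t → ∀ i, 0 ≤ q t i) →
      ∀ t, 0 ≤ t → (∀ i j, 0 ≤ M t i j) ∧ (∀ i, ∑ j, M t i j = 1)) := by
  set a : ℝ → ℝ := fun t => ∑ i, q t i with ha_def
  have ha : Continuous a :=
    continuous_finset_sum _ fun i _ => (continuous_apply i).comp hq
  -- Step 1: row sums are constantly 1
  have hrow : ∀ t, 0 ≤ t → ∀ i, ∑ j, M t i j = 1 := by
    intro t ht i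
    have key : ∀ s, 0 ≤ s →
        HasDerivAt (fun u => (∑ j, M u i j) - 1) (-((0:ℝ)) * ((∑ j, M s i j) - 1)) s := by
      intro s hs
      have hsum : HasDerivAt (fun u => ∑ j, M u i j)
          (∑ j, (M s * Qgen d (q s)) i j) s :=
        HasDerivAt.fun_sum fun j _ => hM s hs i j
      have hval : (∑ j, (M s * Qgen d (q s)) i j) = 0 := by
        simp only [mul_Qgen_apply]
        rw [Finset.sum_add_distrib, ← Finset.mul_sum, ← Finset.mul_sum]
        ring
      have := (hsum.sub_const 1)
      rw [hval] at this
      refine this.congr_deriv ?_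
      ring
    have h2 : (∑ j, M t i j) - 1 = 0 := zero_of_ode (fun _ => 0)
      (fun u => (∑ j, M u i j) - 1) continuous_const
      key (by simp [hM0, Matrix.one_apply]) t ht
    linarith
  -- Step 2: entrywise scalar ODE
  have hent : ∀ t, 0 ≤ t → ∀ i j,
      HasDerivAt (fun s => M s i j) (-(a t) * M t i j + q t j) t := by
    intro t ht i j
    have := hM t ht i j
    rwa [mul_Qgen_apply, hrow t ht i, one_mul] at this
  -- Step 3: off-diagonal entries in a column agree
  have hcol : ∀ t, 0 ≤ t → ∀ i k j : Fin d, i ≠ j → k ≠ j → M t i j = M t k j := by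
    intro t ht i k j hij hkj
    have key : ∀ s, 0 ≤ s →
        HasDerivAt (fun u => M u i j - M u k j) (-(a s) * (M s i j - M s k j)) s := by
      intro s hs
      have := (hent s hs i j).sub (hent s hs k j)
      refine this.congr_deriv ?_
      ring
    have h2 : M t i j - M t k j = 0 := zero_of_ode a (fun u => M u i j - M u k j) ha key
      (by simp [hM0, Matrix.one_apply, hij, hkj]) t ht
    linarith
  refine ⟨?_, ?_⟩
  · -- equal-input structure
    intro t ht
    rcases eq_or_lt_of_le hd with hd1 | hd2
    · -- d = 1
      have hd1' : d = 1 := hd1.symm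
      subst hd1'
      refine ⟨0, ?_⟩
      ext i j
      have hi : i = 0 := Fin.eq_zero i
      have hj : j = 0 := Fin.eq_zero j
      subst hi; subst hj
      have hr := hrow t ht 0
      rw [Fin.sum_univ_one] at hr
      simp [eqRows, Matrix.one_apply, hr]
    · -- d ≥ 2
      have h1d : 1 < d := hd2
      set p : Fin d → Fin d := fun j => if (j : ℕ) = 0 then ⟨1, h1d⟩ else ⟨0, by omega⟩
        with hp_def
      have hp : ∀ j, p j ≠ j := by
        intro j
        simp only [hp_def]
        split <;> (intro h; have h2 := congrArg Fin.val h; simp only [] at h2; omega)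
      refine ⟨fun j => M t (p j) j, ?_⟩
      ext i j
      by_cases hij : i = j
      · subst hij
        have hr := hrow t ht i
        have hsplit : ∑ k, M t i k =
            M t i i + ∑ k ∈ Finset.univ.erase i, M t i k := by
          rw [← Finset.add_sum_erase _ _ (Finset.mem_univ i)]
        have hterm : ∀ k ∈ Finset.univ.erase i, M t i k = M t (p k) k := by
          intro k hk
          exact hcol t ht i (p k) k (Finset.ne_of_mem_erase hk).symm (hp k)
        have hsum2 : ∑ k, M t (p k) k =
            M t (p i) i + ∑ k ∈ Finset.univ.erase i, M t (p k) k := by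
          rw [← Finset.add_sum_erase _ _ (Finset.mem_univ i)]
        rw [Finset.sum_congr rfl hterm] at hsplit
        simp only [Matrix.add_apply, Matrix.smul_apply, Matrix.one_apply_eq, smul_eq_mul,
          mul_one, eqRows, Matrix.of_apply]
        rw [hsum2]
        rw [hsplit] at hr
        linarith
      · simp only [Matrix.add_apply, Matrix.smul_apply, Matrix.one_apply_ne hij, smul_eq_mul,
          mul_zero, eqRows, Matrix.of_apply, zero_add]
        exact hcol t ht i (p j) j hij (hp j)
  · -- Markov part
    intro hqpos t ht
    refine ⟨?_, hrow t ht⟩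
    intro i j
    exact nonneg_of_ode a (fun s => q s j) (fun s => M s i j) ha
      (fun s hs => hent s hs i j) (fun s hs => hqpos s hs j)
      (by simp [hM0, Matrix.one_apply]; positivity) t ht
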